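/- Let f(y) = 4y(1 − y) be the logistic map at fully developed chaos. Then for y ∈ (0, 1): (a) if 0 < y < 1/4 then y < f(y) < f(f(y)); (b) if 1/4 < y < (5−√5)/8 then y < f(f(y)) < f(y); (c) if (5−√5)/8 < y < 3/4 then f(f(y)) < y < f(y); (d) if 3/4 < y < (5+√5)/8 then f(y) < y < f(f(y)); (e) if (5+√5)/8 < y < 1 then f(y) < f(f(y)) < y; and (f) there is no y ∈ (0, 1) with f(f(y)) < f(y) < y, i.e., the ordinal pattern (2,1,0) is forbidden for the logistic map with embedding dimension 3. -/
import Mathlib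


/-- The logistic map at fully developed chaos. -/
noncomputable def logisticMap (y : ℝ) : ℝ := 4 * y * (1 - y)

/-- The ordinal patterns of the triple `(y, f(y), f(f(y)))` for the logistic map
`f(y) = 4y(1-y)` on the five subintervals of `(0,1)`, and the fact that the
pattern `(2,1,0)` (i.e. `f(f(y)) < f(y) < y`) is forbidden. -/
theorem logistic_ordinal_patterns :
    (∀ y : ℝ, 0 < y → y < 1 / 4 →
      y < logisticMap y ∧ logisticMap y < logisticMap (logisticMap y)) ∧
    (∀ y : ℝ, 1 / 4 < y → y < (5 - Real.sqrt 5) / 8 →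
      y < logisticMap (logisticMap y) ∧ logisticMap (logisticMap y) < logisticMap y) ∧
    (∀ y : ℝ, (5 - Real.sqrt 5) / 8 < y → y < 3 / 4 →
      logisticMap (logisticMap y) < y ∧ y < logisticMap y) ∧
    (∀ y : ℝ, 3 / 4 < y → y < (5 + Real.sqrt 5) / 8 →
      logisticMap y < y ∧ y < logisticMap (logisticMap y)) ∧
    (∀ y : ℝ, (5 + Real.sqrt 5) / 8 < y → y < 1 →
      logisticMap y < logisticMap (logisticMap y) ∧ logisticMap (logisticMap y) < y) ∧
    ¬ ∃ y : ℝ, 0 < y ∧ y < 1 ∧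
      logisticMap (logisticMap y) < logisticMap y ∧ logisticMap y < y := by
  have hs : Real.sqrt 5 ^ 2 = 5 := Real.sq_sqrt (by norm_num)
  have hs1 : (2:ℝ) < Real.sqrt 5 := by
    nlinarith [Real.sqrt_nonneg 5, hs]
  have hs2 : Real.sqrt 5 < 3 := by
    nlinarith [Real.sqrt_nonneg 5, hs]
  set s := Real.sqrt 5 with hsdef
  refine ⟨?_, ?_, ?_, ?_, ?_, ?_⟩
  · intro y h0 h1
    simp only [logisticMap]
    constructor
    · nlinarith
    · nlinarith [mul_pos (mul_pos (mul_pos h0 (by linarith : (0:ℝ) < 1 - y))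
        (by linarith : (0:ℝ) < 1 - 4*y)) (by linarith : (0:ℝ) < 3 - 4*y)]
  · intro y h0 h1
    have hq : 0 < 16*y^2 - 20*y + 5 := by
      nlinarith [mul_pos (by nlinarith : (0:ℝ) < (5 - s)/8 - y)
        (by nlinarith : (0:ℝ) < (5 + s)/8 - y)]
    simp only [logisticMap]
    constructor
    · nlinarith [mul_pos (mul_pos (by nlinarith : (0:ℝ) < y)
        (by nlinarith : (0:ℝ) < 3 - 4*y)) hq]
    · nlinarith [mul_pos (mul_pos (mul_pos (by nlinarith : (0:ℝ) < y)
        (by nlinarith : (0:ℝ) < 1 - y)) (by nlinarith : (0:ℝ) < 4*y - 1))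
        (by nlinarith : (0:ℝ) < 3 - 4*y)]
  · intro y h0 h1
    have hy0 : (0:ℝ) < y := by nlinarith
    have hq : 16*y^2 - 20*y + 5 < 0 := by
      nlinarith [mul_pos (by nlinarith : (0:ℝ) < y - (5 - s)/8)
        (by nlinarith : (0:ℝ) < (5 + s)/8 - y)]
    simp only [logisticMap]
    constructor
    · nlinarith [mul_pos (mul_pos hy0 (by nlinarith : (0:ℝ) < 3 - 4*y))
        (by nlinarith : (0:ℝ) < -(16*y^2 - 20*y + 5))]
    · nlinarith
  · intro y h0 h1
    have hy0 : (0:ℝ) < y := by nlinarith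
    have hq : 16*y^2 - 20*y + 5 < 0 := by
      nlinarith [mul_pos (by nlinarith : (0:ℝ) < y - (5 - s)/8)
        (by nlinarith : (0:ℝ) < (5 + s)/8 - y)]
    simp only [logisticMap]
    constructor
    · nlinarith
    · nlinarith [mul_pos (mul_pos hy0 (by nlinarith : (0:ℝ) < 4*y - 3))
        (by nlinarith : (0:ℝ) < -(16*y^2 - 20*y + 5))]
  · intro y h0 h1
    have hy0 : (0:ℝ) < y := by nlinarith
    have hq : 0 < 16*y^2 - 20*y + 5 := by
      nlinarith [mul_pos (by nlinarith : (0:ℝ) < y - (5 - s)/8)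
        (by nlinarith : (0:ℝ) < y - (5 + s)/8)]
    simp only [logisticMap]
    constructor
    · nlinarith [mul_pos (mul_pos (mul_pos hy0
        (by nlinarith : (0:ℝ) < 1 - y)) (by nlinarith : (0:ℝ) < 4*y - 1))
        (by nlinarith : (0:ℝ) < 4*y - 3)]
    · nlinarith [mul_pos (mul_pos hy0 (by nlinarith : (0:ℝ) < 4*y - 3)) hq]
  · rintro ⟨y, h0, h1, h2, h3⟩
    simp only [logisticMap] at h2 h3
    have hy : 3/4 < y := by nlinarith
    nlinarith [mul_pos (mul_pos (mul_pos (by linarith : (0:ℝ) < y)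
      (by linarith : (0:ℝ) < 1 - y)) (by linarith : (0:ℝ) < 4*y - 1))
      (by linarith : (0:ℝ) < 4*y - 3)]
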